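/- Suppose the instance satisfies (⋆). Then in every clique tree T of G_I, the pair AB is an edge of T, and each node Q_i (i ∈ {1, …, n}) is a leaf of T. -/
import Mathlib


open SimpleGraph

/-- The degree of a vertex in a graph, via `Set.ncard`. -/
noncomputable def deg {W : Type*} (T : SimpleGraph W) (w : W) : ℕ :=
  (T.neighborSet w).ncard

/-- The set of leaves (degree-one vertices) of a graph. -/
def leaves {W : Type*} (T : SimpleGraph W) : Set W :=
  {w | deg T w = 1}

/-- The number of leaves. -/
noncomputable def numLeaves {W : Type*} (T : SimpleGraph W) : ℕ :=
  (leaves T).ncard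

/-- The set of leaves of the subgraph of `T` induced by `s`
(nodes of `s` with exactly one neighbour inside `s`). -/
def subLeaves {W : Type*} (T : SimpleGraph W) (s : Set W) : Set W :=
  {w | w ∈ s ∧ (T.neighborSet w ∩ s).ncard = 1}

/-- The number of leaves of the subtree induced by `s`. -/
noncomputable def numSubLeaves {W : Type*} (T : SimpleGraph W) (s : Set W) : ℕ :=
  (subLeaves T s).ncard

/-- A tree model of a graph `G`: a finite host tree `T` together with nonempty
subtrees `sub u` such that distinct vertices are adjacent in `G` iff their
subtrees intersect. -/
structure TreeModel {V : Type*} (G : SimpleGraph V) where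
  W : Type
  finW : Finite W
  T : SimpleGraph W
  tree : T.IsTree
  sub : V → Set W
  sub_nonempty : ∀ u, (sub u).Nonempty
  sub_conn : ∀ u, (T.induce (sub u)).Connected
  adj_iff : ∀ u v, u ≠ v → (G.Adj u v ↔ (sub u ∩ sub v).Nonempty)

/-- The leafage of a chordal graph: the minimum number of host-tree leaves over
all tree models. -/
noncomputable def leafage {V : Type*} (G : SimpleGraph V) : ℕ :=
  sInf {n | ∃ M : TreeModel G, numLeaves M.T = n}

/-- The vertex leafage of a chordal graph: the least `k` such that `G` has a tree
model all of whose subtrees have at most `k` leaves. -/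
noncomputable def vleafage {V : Type*} (G : SimpleGraph V) : ℕ :=
  sInf {k | ∃ M : TreeModel G, ∀ u, numSubLeaves M.T (M.sub u) ≤ k}

/-- A maximal clique of `G`. -/
def IsMaxClique {V : Type*} (G : SimpleGraph V) (C : Set V) : Prop :=
  G.IsClique C ∧ ∀ D, G.IsClique D → C ⊆ D → D = C

/-- The type of maximal cliques of `G`. -/
abbrev MaxCliques {V : Type*} (G : SimpleGraph V) := {C : Set V // IsMaxClique G C}

/-- A clique tree of `G`: a tree whose nodes are exactly the maximal cliques of `G`,
such that every node on the path between nodes `C` and `C'` contains `C ∩ C'`. -/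
structure CliqueTree {V : Type*} (G : SimpleGraph V) where
  T : SimpleGraph (MaxCliques G)
  tree : T.IsTree
  path_cond : ∀ (C C' : MaxCliques G) (p : T.Walk C C'), p.IsPath →
    ∀ C'' ∈ p.support, C.1 ∩ C'.1 ⊆ C''.1

/-- The subtree (node set) assigned to a vertex `u` in the tree model defined by a
clique tree of `G`: the set of maximal cliques containing `u`. -/
def cliqueSub {V : Type*} (G : SimpleGraph V) (u : V) : Set (MaxCliques G) :=
  {C | u ∈ C.1}

/-- The set of nodes of degree at least 3. -/
def Hh {W : Type*} (T : SimpleGraph W) : Set W := {w | 3 ≤ deg T w}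

/-- The set of edges incident to a node of degree at least 3. -/
def Ee {W : Type*} (T : SimpleGraph W) : Set (Sym2 W) :=
  {e | e ∈ T.edgeSet ∧ ∃ w ∈ e, w ∈ Hh T}

/-- The vertex set of the graph `G_I`: variable vertices `v i`, clause vertices `y j`,
and two extra vertices `z 0`, `z 1`. -/
inductive GV (n m : ℕ) where
  | v : Fin n → GV n m
  | y : Fin m → GV n m
  | z : Fin 2 → GV n m
deriving DecidableEq

instance (n m : ℕ) : Finite (GV n m) :=
  Finite.of_surjective
    (fun x : (Fin n ⊕ Fin m ⊕ Fin 2) => match x with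
      | Sum.inl i => GV.v i
      | Sum.inr (Sum.inl j) => GV.y j
      | Sum.inr (Sum.inr t) => GV.z t)
    (by
      intro g
      cases g with
      | v i => exact ⟨Sum.inl i, rfl⟩
      | y j => exact ⟨Sum.inr (Sum.inl j), rfl⟩
      | z t => exact ⟨Sum.inr (Sum.inr t), rfl⟩)

/-- The split graph `G_I` of the reduction: `{y j}` is a clique, `{v i} ∪ {z t}` is an
independent set, `v i` is adjacent to `y j` iff `i ∈ C j`, and each `z t` is adjacent to
every `y j`. -/
def GI (n m : ℕ) (C : Fin m → Finset (Fin n)) : SimpleGraph (GV n m) :=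
  SimpleGraph.fromRel (fun a b =>
    match a, b with
    | GV.y _, GV.y _ => True
    | GV.v i, GV.y j => i ∈ C j
    | GV.z _, GV.y _ => True
    | _, _ => False)

/-- The maximal clique `A = {z_1, y_1, …, y_m}`. -/
def setA (n m : ℕ) : Set (GV n m) := {GV.z 0} ∪ {x | ∃ j, x = GV.y j}

/-- The maximal clique `B = {z_2, y_1, …, y_m}`. -/
def setB (n m : ℕ) : Set (GV n m) := {GV.z 1} ∪ {x | ∃ j, x = GV.y j}

/-- The maximal clique `Q_i = {v_i} ∪ {y_j : v_i ∈ C_j}`. -/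
def setQ (n m : ℕ) (C : Fin m → Finset (Fin n)) (i : Fin n) : Set (GV n m) :=
  {GV.v i} ∪ {x | ∃ j, x = GV.y j ∧ i ∈ C j}


section Aux

variable {n m : ℕ} {C : Fin m → Finset (Fin n)}

lemma adj_yy {j j' : Fin m} (h : j ≠ j') : (GI n m C).Adj (GV.y j) (GV.y j') := by
  rw [GI, SimpleGraph.fromRel_adj]
  exact ⟨by simpa using h, Or.inl trivial⟩

lemma adj_zy (t : Fin 2) (j : Fin m) : (GI n m C).Adj (GV.z t) (GV.y j) := by
  rw [GI, SimpleGraph.fromRel_adj]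
  exact ⟨by simp, Or.inl trivial⟩

lemma adj_vy {i : Fin n} {j : Fin m} (h : i ∈ C j) : (GI n m C).Adj (GV.v i) (GV.y j) := by
  rw [GI, SimpleGraph.fromRel_adj]
  exact ⟨by simp, Or.inl h⟩

lemma adj_v_cases {i : Fin n} {w : GV n m} (h : (GI n m C).Adj (GV.v i) w) :
    ∃ j, w = GV.y j ∧ i ∈ C j := by
  rw [GI, SimpleGraph.fromRel_adj] at h
  obtain ⟨hne, h | h⟩ := h <;> cases w <;> simp_all <;> exact ⟨_, rfl, h⟩

lemma adj_z_cases {t : Fin 2} {w : GV n m} (h : (GI n m C).Adj (GV.z t) w) :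
    ∃ j, w = GV.y j := by
  rw [GI, SimpleGraph.fromRel_adj] at h
  obtain ⟨hne, h | h⟩ := h <;> cases w <;> simp_all

lemma cliqueA : (GI n m C).IsClique (setA n m) := by
  intro a ha b hb hab
  simp only [setA, Set.mem_union, Set.mem_singleton_iff, Set.mem_setOf_eq] at ha hb
  obtain (rfl | ⟨j, rfl⟩) := ha <;> obtain (rfl | ⟨j', rfl⟩) := hb
  · exact absurd rfl hab
  · exact adj_zy _ _
  · exact (adj_zy _ _).symm
  · exact adj_yy (by rintro rfl; exact hab rfl)

lemma cliqueB : (GI n m C).IsClique (setB n m) := by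
  intro a ha b hb hab
  simp only [setB, Set.mem_union, Set.mem_singleton_iff, Set.mem_setOf_eq] at ha hb
  obtain (rfl | ⟨j, rfl⟩) := ha <;> obtain (rfl | ⟨j', rfl⟩) := hb
  · exact absurd rfl hab
  · exact adj_zy _ _
  · exact (adj_zy _ _).symm
  · exact adj_yy (by rintro rfl; exact hab rfl)

lemma cliqueQ (i : Fin n) : (GI n m C).IsClique (setQ n m C i) := by
  intro a ha b hb hab
  simp only [setQ, Set.mem_union, Set.mem_singleton_iff, Set.mem_setOf_eq] at ha hb
  obtain (rfl | ⟨j, rfl, hj⟩) := ha <;> obtain (rfl | ⟨j', rfl, hj'⟩) := hb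
  · exact absurd rfl hab
  · exact adj_vy hj'
  · exact (adj_vy hj).symm
  · exact adj_yy (by rintro rfl; exact hab rfl)

lemma maxA : IsMaxClique (GI n m C) (setA n m) := by
  refine ⟨cliqueA, fun D hD hsub => ?_⟩
  apply Set.Subset.antisymm _ hsub
  intro w hw
  have hz : GV.z 0 ∈ D := hsub (Or.inl rfl)
  rcases eq_or_ne w (GV.z 0) with rfl | hne
  · exact Or.inl rfl
  · obtain ⟨j, rfl⟩ := adj_z_cases (hD hz hw (Ne.symm hne))
    exact Or.inr ⟨j, rfl⟩

lemma maxB : IsMaxClique (GI n m C) (setB n m) := by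
  refine ⟨cliqueB, fun D hD hsub => ?_⟩
  apply Set.Subset.antisymm _ hsub
  intro w hw
  have hz : GV.z 1 ∈ D := hsub (Or.inl rfl)
  rcases eq_or_ne w (GV.z 1) with rfl | hne
  · exact Or.inl rfl
  · obtain ⟨j, rfl⟩ := adj_z_cases (hD hz hw (Ne.symm hne))
    exact Or.inr ⟨j, rfl⟩

lemma maxQ (i : Fin n) : IsMaxClique (GI n m C) (setQ n m C i) := by
  refine ⟨cliqueQ i, fun D hD hsub => ?_⟩
  apply Set.Subset.antisymm _ hsub
  intro w hw
  have hv : GV.v i ∈ D := hsub (Or.inl rfl)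
  rcases eq_or_ne w (GV.v i) with rfl | hne
  · exact Or.inl rfl
  · obtain ⟨j, rfl, hj⟩ := adj_v_cases (hD hv hw (Ne.symm hne))
    exact Or.inr ⟨j, rfl, hj⟩

/-- Classification of maximal cliques of `G_I`. -/
lemma classify {D : Set (GV n m)} (hD : IsMaxClique (GI n m C) D) :
    D = setA n m ∨ D = setB n m ∨ ∃ i, D = setQ n m C i := by
  by_cases hv : ∃ i, GV.v i ∈ D
  · obtain ⟨i, hi⟩ := hv
    refine Or.inr (Or.inr ⟨i, ?_⟩)
    refine (hD.2 (setQ n m C i) (cliqueQ i) ?_).symm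
    intro w hw
    rcases eq_or_ne w (GV.v i) with rfl | hne
    · exact Or.inl rfl
    · obtain ⟨j, rfl, hj⟩ := adj_v_cases (hD.1 hi hw (Ne.symm hne))
      exact Or.inr ⟨j, rfl, hj⟩
  · by_cases hz : GV.z 1 ∈ D
    · refine Or.inr (Or.inl ?_)
      refine (hD.2 (setB n m) cliqueB ?_).symm
      intro w hw
      cases w with
      | v i => exact absurd ⟨i, hw⟩ hv
      | y j => exact Or.inr ⟨j, rfl⟩
      | z t =>
        have : t = 1 := by
          by_contra ht
          have ht0 : t = 0 := by
            have h2 := t.isLt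
            rcases (by omega : t.val = 0 ∨ t.val = 1) with h | h
            · exact Fin.ext h
            · exact absurd (Fin.ext h) ht
          subst ht0
          have := hD.1 hz hw (by simp)
          obtain ⟨j, hj⟩ := adj_z_cases this
          exact absurd hj (by simp)
        subst this; exact Or.inl rfl
    · refine Or.inl ?_
      refine (hD.2 (setA n m) cliqueA ?_).symm
      intro w hw
      cases w with
      | v i => exact absurd ⟨i, hw⟩ hv
      | y j => exact Or.inr ⟨j, rfl⟩
      | z t =>
        have : t = 0 := by
          have h2 := t.isLt
          rcases (by omega : t.val = 0 ∨ t.val = 1) with h | h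
          · exact Fin.ext h
          · exact absurd (by rw [show t = 1 from Fin.ext h] at hw; exact hw) hz
        subst this; exact Or.inl rfl

end Aux

lemma mid_mem {W : Type*} {T : SimpleGraph W} (ht : T.IsTree) {x d d' : W}
    (h1 : T.Adj x d) (h2 : T.Adj x d') (hdd : d ≠ d')
    {p : T.Walk d d'} (hp : p.IsPath) : x ∈ p.support := by
  classical
  by_contra hx
  have hq1 : (Walk.cons h2 (Walk.nil : T.Walk d' d')).IsPath := by
    simp [Walk.cons_isPath_iff, h2.ne]
  have hq2 : (Walk.cons h1 p).IsPath := hp.cons hx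
  obtain ⟨pu, _, hun⟩ := ht.existsUnique_path x d'
  have e1 := hun _ hq1
  have e2 := hun _ hq2
  have hsup := congrArg Walk.support (e1.trans e2.symm)
  simp only [Walk.support_cons, Walk.support_nil] at hsup
  have hds : p.support = [d'] := by
    injection hsup with _ h; exact h.symm
  have hd := p.start_mem_support
  rw [hds] at hd
  simp at hd
  exact hdd hd

lemma Y_mem_setQ {n m : ℕ} {C : Fin m → Finset (Fin n)} {i : Fin n} {j : Fin m}
    (h : GV.y j ∈ setQ n m C i) : i ∈ C j := by
  rcases h with h | ⟨j', hj', hij'⟩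
  · simp at h
  · obtain rfl : j' = j := by simpa using hj'.symm
    exact hij'

/-- Suppose the instance satisfies `(⋆)`. Then in every clique tree `T` of `G_I`, the
pair `AB` is an edge of `T`, and each node `Q_i` is a leaf of `T`. -/
theorem stmt8 (k n m : ℕ) (hk : 3 ≤ k) (hn : k ≤ n) (hm : 1 ≤ m)
    (C : Fin m → Finset (Fin n)) (hC : ∀ j, (C j).card = k)
    (hstar : ¬ ∃ i i' : Fin n, i ≠ i' ∧ ∀ j, i ∈ C j → i' ∈ C j)
    (CT : CliqueTree (GI n m C)) :
    (∀ D D' : MaxCliques (GI n m C), D.1 = setA n m → D'.1 = setB n m →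
      CT.T.Adj D D') ∧
    (∀ (D : MaxCliques (GI n m C)) (i : Fin n), D.1 = setQ n m C i →
      deg CT.T D = 1) := by

  classical
  have hQA : ∀ i : Fin n, ¬ (∀ j, i ∈ C j) := by
    intro i hall
    have hnt : Nontrivial (Fin n) :=
      ⟨⟨0, by omega⟩, ⟨1, by omega⟩, by simp [Fin.ext_iff]⟩
    obtain ⟨i', hi'⟩ := exists_ne i
    exact hstar ⟨i', i, hi', fun j _ => hall j⟩
  constructor
  · -- A and B are adjacent
    intro D D' hA hB
    have hDD' : D ≠ D' := by
      intro h
      rw [h, hB] at hA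
      have hz : GV.z 1 ∈ setB n m := Or.inl rfl
      rw [hA] at hz
      simp [setA, Fin.ext_iff] at hz
    obtain ⟨w⟩ := CT.tree.isConnected.preconnected D D'
    obtain ⟨p, hp⟩ : ∃ p : CT.T.Walk D D', p.IsPath := ⟨w.toPath.1, w.toPath.2⟩
    cases p with
    | nil => exact absurd rfl hDD'
    | cons h q =>
      cases q with
      | nil => exact h
      | cons h' q' =>
        exfalso
        rename_i x b
        have hmem : x ∈ (Walk.cons h (Walk.cons h' q')).support := by
          simp
        have hsub := CT.path_cond D D' _ hp x hmem
        rw [Walk.cons_isPath_iff] at hp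
        obtain ⟨hp2, hDnot⟩ := hp
        have hxD : x ≠ D := fun hh => hDnot (hh ▸ Walk.start_mem_support _)
        rw [Walk.cons_isPath_iff] at hp2
        obtain ⟨hq', hxnot⟩ := hp2
        have hxD' : x ≠ D' := fun hh => hxnot (hh ▸ Walk.end_mem_support q')
        rcases classify x.2 with hxA | hxB | ⟨i, hxQ⟩
        · exact hxD (Subtype.ext (hxA.trans hA.symm))
        · exact hxD' (Subtype.ext (hxB.trans hB.symm))
        · refine hQA i (fun j => ?_)
          have hy : GV.y j ∈ x.1 := by
            apply hsub
            constructor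
            · rw [hA]; exact Or.inr ⟨j, rfl⟩
            · rw [hB]; exact Or.inr ⟨j, rfl⟩
          rw [hxQ] at hy
          exact Y_mem_setQ hy
  · -- each Q_i is a leaf
    intro Q i hQ
    obtain ⟨nA, hAval⟩ : ∃ nA : MaxCliques (GI n m C), nA.1 = setA n m :=
      ⟨⟨_, maxA⟩, rfl⟩
    have hQnA : Q ≠ nA := by
      intro h
      rw [← h, hQ] at hAval
      have hv : GV.v i ∈ setA n m := by rw [← hAval]; exact Or.inl rfl
      simp [setA] at hv
    by_contra hdeg
    have hfin : (CT.T.neighborSet Q).Finite := Set.toFinite _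
    have h1 : 0 < (CT.T.neighborSet Q).ncard := by
      rw [Set.ncard_pos hfin]
      obtain ⟨w⟩ := CT.tree.isConnected.preconnected Q nA
      cases w with
      | nil => exact absurd rfl hQnA
      | cons h q => exact ⟨_, h⟩
    have h2 : 1 < (CT.T.neighborSet Q).ncard := by
      simp only [deg] at hdeg; omega
    obtain ⟨d, d', hd, hd', hdd⟩ := (Set.one_lt_ncard_iff hfin).mp h2
    obtain ⟨wd⟩ := CT.tree.isConnected.preconnected nA d
    obtain ⟨wd'⟩ := CT.tree.isConnected.preconnected nA d'
    have key : ∃ e, CT.T.Adj Q e ∧ ∃ p : CT.T.Walk nA e, p.IsPath ∧ Q ∈ p.support := by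
      by_cases hmem : Q ∈ wd.toPath.1.support
      · exact ⟨d, hd, wd.toPath.1, wd.toPath.2, hmem⟩
      · refine ⟨d', hd', wd'.toPath.1, wd'.toPath.2, ?_⟩
        by_contra hmem'
        have hmid := mid_mem CT.tree hd hd' hdd
          (p := (wd.toPath.1.reverse.append wd'.toPath.1).bypass) (Walk.bypass_isPath _)
        have hin := Walk.support_bypass_subset _ hmid
        rw [Walk.support_append] at hin
        rcases List.mem_append.mp hin with hh | hh
        · exact hmem (by rwa [Walk.support_reverse, List.mem_reverse] at hh)
        · exact hmem' (List.mem_of_mem_tail hh)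
    obtain ⟨e, he, p, hp, hmem⟩ := key
    have hsub := CT.path_cond nA e p hp Q hmem
    rcases classify e.2 with heA | heB | ⟨i', heQ⟩
    · -- e = A : then setA ⊆ Q.1, but z0 ∉ setQ i
      have hz : GV.z 0 ∈ Q.1 :=
        hsub ⟨by rw [hAval]; exact Or.inl rfl, by rw [heA]; exact Or.inl rfl⟩
      rw [hQ] at hz
      simp [setQ] at hz
    · -- e = B : then Y ⊆ Q.1
      refine hQA i (fun j => ?_)
      have hy : GV.y j ∈ Q.1 :=
        hsub ⟨by rw [hAval]; exact Or.inr ⟨j, rfl⟩, by rw [heB]; exact Or.inr ⟨j, rfl⟩⟩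
      rw [hQ] at hy
      exact Y_mem_setQ hy
    · -- e = Q_{i'}
      have hii' : i' ≠ i := by
        intro h
        subst h
        exact he.ne' (Subtype.ext (heQ.trans hQ.symm))
      refine hstar ⟨i', i, hii', fun j hj => ?_⟩
      have hy : GV.y j ∈ Q.1 :=
        hsub ⟨by rw [hAval]; exact Or.inr ⟨j, rfl⟩, by rw [heQ]; exact Or.inr ⟨j, rfl, hj⟩⟩
      rw [hQ] at hy
      exact Y_mem_setQ hy
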